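/- arXiv:0809.1834 — 2 statements merged into one kernel-verified Lean document; each statement's English description precedes it below -/
import Mathlib

section
/- Suppose for a given control problem with running cost h(α)=‖α‖²_{L²}/2 the final-cost functional satisfies |g(φ¹(T)) − g(φ²(T))| ≤ R ∫_{t₀}^T ‖α¹ − α²‖ dt whenever α², φ² arise from truncating α¹ to zero on the set {t : ‖α¹(t)‖ > 2R}. Then v(α²) ≤ v(α¹), where v(α) = ∫_{t₀}^T ‖α(t)‖²/2 dt + g(φ(T)). Consequently the infimum of v over all L² controls equals the infimum over controls bounded by 2R in L^∞(t₀,T;L²). -/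
open MeasureTheory intervalIntegral

/-- Truncating a control to zero where `‖α(t)‖ > 2R` does not increase the
total cost `v(α) = ∫ ‖α‖²/2 + g(φ(T))`, provided the change in terminal cost is bounded
by `R ∫ ‖α¹ - α²‖`.  Consequently the infimum of the cost over all (square-integrable)
controls equals the infimum over controls bounded by `2R` in `L^∞(t₀,T;L²)`.
Here `G α` abstracts the terminal cost `g(φ(T))` of the trajectory driven by `α`. -/
theorem stmt3
    {H : Type*} [NormedAddCommGroup H] [InnerProductSpace ℝ H]
    (t₀ T R : ℝ) (ht : t₀ ≤ T) (hR : 0 < R)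
    (G : (ℝ → H) → ℝ)
    (trunc : (ℝ → H) → (ℝ → H))
    (htrunc : ∀ (α : ℝ → H) (t : ℝ), trunc α t = if ‖α t‖ ≤ 2 * R then α t else 0)
    (hG : ∀ α : ℝ → H, IntervalIntegrable (fun t => ‖α t‖ ^ 2) volume t₀ T →
      |G (trunc α) - G α| ≤ R * ∫ t in t₀..T, ‖trunc α t - α t‖) :
    (∀ α : ℝ → H, IntervalIntegrable (fun t => ‖α t‖ ^ 2) volume t₀ T →
      (∫ t in t₀..T, ‖trunc α t‖ ^ 2 / 2) + G (trunc α)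
        ≤ (∫ t in t₀..T, ‖α t‖ ^ 2 / 2) + G α) ∧
    sInf ((fun α : ℝ → H => (∫ t in t₀..T, ‖α t‖ ^ 2 / 2) + G α) ''
        {α | IntervalIntegrable (fun t => ‖α t‖ ^ 2) volume t₀ T})
      = sInf ((fun α : ℝ → H => (∫ t in t₀..T, ‖α t‖ ^ 2 / 2) + G α) ''
        {α | IntervalIntegrable (fun t => ‖α t‖ ^ 2) volume t₀ T ∧
          ∀ t ∈ Set.Icc t₀ T, ‖α t‖ ≤ 2 * R}) := by
  have h2R : (0:ℝ) < 2 * R := by linarith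
  -- main auxiliary statement
  have main : ∀ α : ℝ → H, IntervalIntegrable (fun t => ‖α t‖ ^ 2) volume t₀ T →
      IntervalIntegrable (fun t => ‖trunc α t‖ ^ 2) volume t₀ T ∧
      (∫ t in t₀..T, ‖trunc α t‖ ^ 2 / 2) + G (trunc α)
        ≤ (∫ t in t₀..T, ‖α t‖ ^ 2 / 2) + G α := by
    intro α hα
    set p : ℝ → ℝ := fun t => ‖α t‖ ^ 2 with hp
    have hcond : ∀ t, (‖α t‖ ≤ 2 * R ↔ p t ≤ (2 * R) ^ 2) := fun t =>
      (pow_le_pow_iff_left₀ (norm_nonneg _) (le_of_lt h2R) two_ne_zero).symm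
    have hqeq : ∀ t, ‖trunc α t‖ ^ 2 = (fun x => if x ≤ (2*R)^2 then x else 0) (p t) := by
      intro t
      rw [htrunc]
      by_cases h : ‖α t‖ ≤ 2 * R
      · simp only [if_pos h, if_pos ((hcond t).mp h), hp]
        exact (if_pos ((hcond t).mp h)).symm
      · simp only [if_neg h, if_neg (fun h' => h ((hcond t).mpr h')), norm_zero]
        norm_num
    have hreq : ∀ t, ‖trunc α t - α t‖
        = (fun x => if x ≤ (2*R)^2 then 0 else Real.sqrt x) (p t) := by
      intro t
      rw [htrunc]
      by_cases h : ‖α t‖ ≤ 2 * R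
      · simp only [if_pos h, if_pos ((hcond t).mp h), sub_self, norm_zero]
      · simp only [if_neg h, if_neg (fun h' => h ((hcond t).mpr h')), zero_sub, norm_neg, hp]
        rw [Real.sqrt_sq (norm_nonneg _)]
        exact (if_neg (fun h' => h ((hcond t).mpr h'))).symm
    have hpInt : IntegrableOn p (Set.Ioc t₀ T) volume :=
      (intervalIntegrable_iff_integrableOn_Ioc_of_le ht).mp hα
    have hpm : AEMeasurable p (volume.restrict (Set.Ioc t₀ T)) := hpInt.aemeasurable
    have hf1m : Measurable (fun x : ℝ => if x ≤ (2*R)^2 then x else 0) :=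
      Measurable.ite (measurableSet_le measurable_id measurable_const)
        measurable_id measurable_const
    have hf2m : Measurable (fun x : ℝ => if x ≤ (2*R)^2 then 0 else Real.sqrt x) :=
      Measurable.ite (measurableSet_le measurable_id measurable_const)
        measurable_const Real.continuous_sqrt.measurable
    have hqInt : IntegrableOn (fun t => ‖trunc α t‖ ^ 2) (Set.Ioc t₀ T) volume := by
      apply Integrable.mono hpInt
      · have := hf1m.comp_aemeasurable hpm
        apply AEMeasurable.aestronglyMeasurable
        convert this using 1
        funext t; exact hqeq t
      · filter_upwards with t
        rw [hqeq t]
        simp only [Real.norm_eq_abs]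
        by_cases h : p t ≤ (2*R)^2
        · simp [if_pos h]
        · simp only [if_neg h, abs_zero]
          exact abs_nonneg _
    have hrInt : IntegrableOn (fun t => ‖trunc α t - α t‖) (Set.Ioc t₀ T) volume := by
      apply Integrable.mono (hpInt.div_const (2*R))
      · have := hf2m.comp_aemeasurable hpm
        apply AEMeasurable.aestronglyMeasurable
        convert this using 1
        funext t; exact hreq t
      · filter_upwards with t
        rw [hreq t]
        simp only [Real.norm_eq_abs]
        by_cases h : p t ≤ (2*R)^2
        · simp only [if_pos h, abs_zero]
          exact abs_nonneg _
        · push_neg at h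
          rw [if_neg (not_le.mpr h)]
          have hps : Real.sqrt (p t) * Real.sqrt (p t) = p t :=
            Real.mul_self_sqrt (sq_nonneg _)
          have h2 : 2 * R < Real.sqrt (p t) := by
            nlinarith [Real.sqrt_nonneg (p t)]
          rw [abs_of_nonneg (Real.sqrt_nonneg _), abs_of_nonneg (by positivity : (0:ℝ) ≤ p t / (2*R))]
          rw [le_div_iff₀ h2R]
          nlinarith [Real.sqrt_nonneg (p t)]
    have hqI : IntervalIntegrable (fun t => ‖trunc α t‖ ^ 2) volume t₀ T :=
      (intervalIntegrable_iff_integrableOn_Ioc_of_le ht).mpr hqInt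
    have hrI : IntervalIntegrable (fun t => ‖trunc α t - α t‖) volume t₀ T :=
      (intervalIntegrable_iff_integrableOn_Ioc_of_le ht).mpr hrInt
    refine ⟨hqI, ?_⟩
    -- pointwise key inequality
    have hpoint : ∀ t ∈ Set.Icc t₀ T,
        ‖trunc α t‖ ^ 2 / 2 + R * ‖trunc α t - α t‖ ≤ ‖α t‖ ^ 2 / 2 := by
      intro t _
      rw [htrunc]
      by_cases h : ‖α t‖ ≤ 2 * R
      · simp [if_pos h]
      · push_neg at h
        rw [if_neg (not_le.mpr h)]
        simp only [norm_zero, zero_sub, norm_neg]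
        nlinarith [norm_nonneg (α t)]
    have hsum : IntervalIntegrable
        (fun t => ‖trunc α t‖ ^ 2 / 2 + R * ‖trunc α t - α t‖) volume t₀ T :=
      (hqI.div_const 2).add (hrI.const_mul R)
    have hmono := intervalIntegral.integral_mono_on ht hsum (hα.div_const 2) hpoint
    rw [intervalIntegral.integral_add (hqI.div_const 2) (hrI.const_mul R),
      intervalIntegral.integral_const_mul] at hmono
    have hGle : G (trunc α) - G α ≤ R * ∫ t in t₀..T, ‖trunc α t - α t‖ :=
      le_of_abs_le (hG α hα)
    linarith
  refine ⟨fun α hα => (main α hα).2, ?_⟩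
  set v : (ℝ → H) → ℝ := fun α => (∫ t in t₀..T, ‖α t‖ ^ 2 / 2) + G α with hv
  set big : Set (ℝ → H) := {α | IntervalIntegrable (fun t => ‖α t‖ ^ 2) volume t₀ T} with hbig
  set small : Set (ℝ → H) := {α | IntervalIntegrable (fun t => ‖α t‖ ^ 2) volume t₀ T ∧
      ∀ t ∈ Set.Icc t₀ T, ‖α t‖ ≤ 2 * R} with hsmall
  have hmem : ∀ α ∈ big, trunc α ∈ small ∧ v (trunc α) ≤ v α := by
    intro α hα
    refine ⟨⟨(main α hα).1, fun t _ => ?_⟩, (main α hα).2⟩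
    rw [htrunc]
    by_cases h : ‖α t‖ ≤ 2 * R
    · rwa [if_pos h]
    · rw [if_neg h, norm_zero]; exact le_of_lt h2R
  have h0small : (0 : ℝ → H) ∈ small := by
    constructor
    · simp only [Pi.zero_apply, norm_zero]
      simpa using intervalIntegrable_const (c := (0:ℝ)) (μ := volume) (a := t₀) (b := T)
    · intro t _
      simp only [Pi.zero_apply, norm_zero]
      exact le_of_lt h2R
  have h0big : (0 : ℝ → H) ∈ big := h0small.1
  have hsub : small ⊆ big := fun α hα => hα.1
  by_cases hbdd : BddBelow (v '' big)
  · apply le_antisymm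
    · exact csInf_le_csInf hbdd ⟨v 0, Set.mem_image_of_mem v h0small⟩
        (Set.image_mono (f := v) hsub)
    · apply le_csInf ⟨v 0, Set.mem_image_of_mem v h0big⟩
      rintro b ⟨α, hα, rfl⟩
      exact le_trans (csInf_le (hbdd.mono (Set.image_mono (f := v) hsub))
        (Set.mem_image_of_mem v (hmem α hα).1)) (hmem α hα).2
  · have hbdd2 : ¬ BddBelow (v '' small) := by
      rintro ⟨c, hc⟩
      exact hbdd ⟨c, by
        rintro b ⟨α, hα, rfl⟩
        exact le_trans (hc (Set.mem_image_of_mem v (hmem α hα).1)) (hmem α hα).2⟩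
    rw [Real.sInf_of_not_bddBelow hbdd, Real.sInf_of_not_bddBelow hbdd2]
end

section
/- Let V be the space of continuous piecewise linear functions on [0,1] vanishing at 0 and 1 with uniform mesh Δx = 1/M. Then V ⊆ D(A^γ) for every γ < 3/4, where A = −δ d²/dx² with Dirichlet conditions and fractional powers defined spectrally. More precisely, for φ₀ ∈ V with distributional second derivative φ₀'' = Δx Σᵢ (D²ξ)ᵢ δ_{iΔx}, the Fourier coefficients satisfy |(ψₙ, φ₀)| ≤ (√2/(n²π²)) (Δx Σᵢ (D²ξ)ᵢ²)^{1/2}, and hence ‖A^γ φ₀‖ ≤ C_γ (Δx Σᵢ (D²ξ)ᵢ²)^{1/2} for γ < 3/4. -/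
open intervalIntegral

/-- Eigenvalues `kₙ = δπ²n²` (n ≥ 1); `kEig δ n` corresponds to `ψ_{n+1}`. -/
noncomputable def kEig (δ : ℝ) (n : ℕ) : ℝ := δ * Real.pi ^ 2 * ((n : ℝ) + 1) ^ 2

/-- The nodal hat basis function at node `i Δx`, `Δx = 1/M`. -/
noncomputable def hatFn (M i : ℕ) (x : ℝ) : ℝ := max 0 (1 - |(M : ℝ) * x - (i : ℝ)|)

/-- The piecewise linear function with nodal values `ξ i`. -/
noncomputable def plf (M : ℕ) (ξ : ℕ → ℝ) (x : ℝ) : ℝ :=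
  ∑ i ∈ Finset.Icc 1 (M - 1), ξ i * hatFn M i x

/-- The second difference quotient `(D²ξ)ᵢ = (ξ_{i+1} - 2ξᵢ + ξ_{i-1})/Δx²`, `Δx = 1/M`. -/
noncomputable def d2q (M : ℕ) (ξ : ℕ → ℝ) (i : ℕ) : ℝ :=
  (M : ℝ) ^ 2 * (ξ (i + 1) - 2 * ξ i + ξ (i - 1))

/-- Fourier coefficient `(ψₙ, φ₀)` with `ψₙ(x) = √2 sin(nπx)`. -/
noncomputable def fcoef (M : ℕ) (ξ : ℕ → ℝ) (n : ℕ) : ℝ :=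
  ∫ x in (0 : ℝ)..1, Real.sqrt 2 * Real.sin ((n : ℝ) * Real.pi * x) * plf M ξ x

lemma aux_deriv (a b c : ℝ) (ha : a ≠ 0) (x : ℝ) :
    HasDerivAt (fun y => -Real.cos (a*y) * (b*y+c)/a + b*Real.sin (a*y)/a^2)
      (Real.sin (a*x) * (b*x+c)) x := by
  have hax : HasDerivAt (fun y => a*y) a x := by simpa using (hasDerivAt_id x).const_mul a
  have hcos := hax.cos
  have hsin := hax.sin
  have hl : HasDerivAt (fun y => b*y + c) b x := by
    simpa using ((hasDerivAt_id x).const_mul b).add_const c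
  have h := ((hcos.neg.mul hl).div_const a).add ((hsin.const_mul b).div_const (a^2))
  convert h using 1
  · rfl
  · rfl
  · funext y
    simp only [Pi.add_apply, Pi.mul_apply, Pi.neg_apply]
  · simp only [Pi.neg_apply]
    field_simp
    ring

lemma int_piece (a b c p q : ℝ) (ha : a ≠ 0) :
    ∫ x in p..q, Real.sin (a*x) * (b*x+c) =
      (-Real.cos (a*q) * (b*q+c)/a + b*Real.sin (a*q)/a^2)
      - (-Real.cos (a*p) * (b*p+c)/a + b*Real.sin (a*p)/a^2) := by
  exact intervalIntegral.integral_eq_sub_of_hasDerivAt (fun x _ => aux_deriv a b c ha x)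
    (Continuous.intervalIntegrable (by continuity) _ _)

lemma hat_cont (M i : ℕ) : Continuous (hatFn M i) := by
  unfold hatFn; fun_prop

lemma hat_left (M i : ℕ) (x : ℝ) (hM : 0 < (M:ℝ)) (h1 : ((i:ℝ)-1)/M ≤ x) (h2 : x ≤ (i:ℝ)/M) :
    hatFn M i x = (M:ℝ)*x - i + 1 := by
  rw [div_le_iff₀ hM] at h1
  rw [le_div_iff₀ hM] at h2
  have : |(M:ℝ)*x - i| = -((M:ℝ)*x - i) := abs_of_nonpos (by nlinarith [mul_comm x (M:ℝ)])
  unfold hatFn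
  rw [this, max_eq_right (by nlinarith [mul_comm x (M:ℝ)])]
  ring

lemma hat_right (M i : ℕ) (x : ℝ) (hM : 0 < (M:ℝ)) (h1 : (i:ℝ)/M ≤ x) (h2 : x ≤ ((i:ℝ)+1)/M) :
    hatFn M i x = (i:ℝ) + 1 - (M:ℝ)*x := by
  rw [div_le_iff₀ hM] at h1
  rw [le_div_iff₀ hM] at h2
  have : |(M:ℝ)*x - i| = (M:ℝ)*x - i := abs_of_nonneg (by nlinarith [mul_comm x (M:ℝ)])
  unfold hatFn
  rw [this, max_eq_right (by nlinarith [mul_comm x (M:ℝ)])]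
  ring

lemma hat_zero (M i : ℕ) (x : ℝ) (h : 1 ≤ |(M:ℝ)*x - i|) : hatFn M i x = 0 := by
  unfold hatFn
  exact max_eq_left (by linarith)

lemma hat_int (M i n : ℕ) (hi1 : 1 ≤ i) (hiM : i + 1 ≤ M) (hn : 1 ≤ n) :
    ∫ x in (0:ℝ)..1, Real.sin ((n:ℝ)*Real.pi*x) * hatFn M i x
    = (M:ℝ)/((n:ℝ)*Real.pi)^2 *
        (2*Real.sin ((n:ℝ)*Real.pi*((i:ℝ)/M)) - Real.sin ((n:ℝ)*Real.pi*(((i:ℝ)-1)/M))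
          - Real.sin ((n:ℝ)*Real.pi*(((i:ℝ)+1)/M))) := by
  have hMpos : (0:ℝ) < M := by
    have : 0 < M := by omega
    exact_mod_cast this
  have hM0 : (M:ℝ) ≠ 0 := ne_of_gt hMpos
  set a : ℝ := (n:ℝ)*Real.pi with ha_def
  have hπ := Real.pi_pos
  have hnpos : (0:ℝ) < n := by exact_mod_cast hn
  have hapos : 0 < a := by positivity
  have ha : a ≠ 0 := ne_of_gt hapos
  have hi1' : (1:ℝ) ≤ i := by exact_mod_cast hi1
  have hiM' : (i:ℝ) + 1 ≤ M := by exact_mod_cast hiM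
  set p1 : ℝ := ((i:ℝ)-1)/M with hp1
  set p2 : ℝ := (i:ℝ)/M with hp2
  set p3 : ℝ := ((i:ℝ)+1)/M with hp3
  have h01 : (0:ℝ) ≤ p1 := div_nonneg (by linarith) hMpos.le
  have h12 : p1 ≤ p2 := by rw [hp1, hp2]; gcongr; linarith
  have h23 : p2 ≤ p3 := by rw [hp2, hp3]; gcongr; linarith
  have h34 : p3 ≤ 1 := by rw [hp3, div_le_one hMpos]; linarith
  have hInt : ∀ p q : ℝ, IntervalIntegrable (fun x => Real.sin (a*x) * hatFn M i x)
      MeasureTheory.volume p q := fun p q =>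
    (Continuous.mul (by fun_prop) (hat_cont M i)).intervalIntegrable p q
  have split : ∫ x in (0:ℝ)..1, Real.sin (a*x) * hatFn M i x
      = (∫ x in (0:ℝ)..p1, Real.sin (a*x) * hatFn M i x)
        + (∫ x in p1..p2, Real.sin (a*x) * hatFn M i x)
        + (∫ x in p2..p3, Real.sin (a*x) * hatFn M i x)
        + (∫ x in p3..(1:ℝ), Real.sin (a*x) * hatFn M i x) := by
    rw [intervalIntegral.integral_add_adjacent_intervals (hInt 0 p1) (hInt p1 p2),
        intervalIntegral.integral_add_adjacent_intervals (hInt 0 p2) (hInt p2 p3),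
        intervalIntegral.integral_add_adjacent_intervals (hInt 0 p3) (hInt p3 1)]
  have z1 : (∫ x in (0:ℝ)..p1, Real.sin (a*x) * hatFn M i x) = 0 := by
    rw [intervalIntegral.integral_congr (g := fun _ => (0:ℝ)), intervalIntegral.integral_const,
      smul_zero]
    intro x hx
    rw [Set.uIcc_of_le h01] at hx
    have hx2 : x ≤ p1 := hx.2
    rw [hp1, le_div_iff₀ hMpos] at hx2
    have h : (M:ℝ)*x - i ≤ -1 := by nlinarith [mul_comm x (M:ℝ)]
    simp only
    rw [hat_zero M i x (le_abs.2 (Or.inr (by linarith))), mul_zero]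
  have z4 : (∫ x in p3..(1:ℝ), Real.sin (a*x) * hatFn M i x) = 0 := by
    rw [intervalIntegral.integral_congr (g := fun _ => (0:ℝ)), intervalIntegral.integral_const,
      smul_zero]
    intro x hx
    rw [Set.uIcc_of_le h34] at hx
    have hx1 : p3 ≤ x := hx.1
    rw [hp3, div_le_iff₀ hMpos] at hx1
    have h : (1:ℝ) ≤ (M:ℝ)*x - i := by nlinarith [mul_comm x (M:ℝ)]
    simp only
    rw [hat_zero M i x (le_abs.2 (Or.inl h)), mul_zero]
  have m1 : (∫ x in p1..p2, Real.sin (a*x) * hatFn M i x)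
      = (-Real.cos (a*p2) * ((M:ℝ)*p2+(1-(i:ℝ)))/a + (M:ℝ)*Real.sin (a*p2)/a^2)
        - (-Real.cos (a*p1) * ((M:ℝ)*p1+(1-(i:ℝ)))/a + (M:ℝ)*Real.sin (a*p1)/a^2) := by
    rw [intervalIntegral.integral_congr (g := fun x => Real.sin (a*x) * ((M:ℝ)*x+(1-(i:ℝ))))]
    · exact int_piece a M (1-(i:ℝ)) p1 p2 ha
    · intro x hx
      rw [Set.uIcc_of_le h12] at hx
      simp only
      rw [hat_left M i x hMpos hx.1 hx.2]
      ring
  have m2 : (∫ x in p2..p3, Real.sin (a*x) * hatFn M i x)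
      = (-Real.cos (a*p3) * (-(M:ℝ)*p3+((i:ℝ)+1))/a + (-(M:ℝ))*Real.sin (a*p3)/a^2)
        - (-Real.cos (a*p2) * (-(M:ℝ)*p2+((i:ℝ)+1))/a + (-(M:ℝ))*Real.sin (a*p2)/a^2) := by
    rw [intervalIntegral.integral_congr (g := fun x => Real.sin (a*x) * (-(M:ℝ)*x+((i:ℝ)+1)))]
    · exact int_piece a (-(M:ℝ)) ((i:ℝ)+1) p2 p3 ha
    · intro x hx
      rw [Set.uIcc_of_le h23] at hx
      simp only
      rw [hat_right M i x hMpos hx.1 hx.2]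
      ring
  rw [split, z1, z4, m1, m2]
  have e1 : (M:ℝ)*p1 = (i:ℝ)-1 := by rw [hp1]; field_simp
  have e2 : (M:ℝ)*p2 = (i:ℝ) := by rw [hp2]; field_simp
  have e3 : (M:ℝ)*p3 = (i:ℝ)+1 := by rw [hp3]; field_simp
  have e1' : -(M:ℝ)*p1 = -((i:ℝ)-1) := by rw [neg_mul, e1]
  have e2' : -(M:ℝ)*p2 = -(i:ℝ) := by rw [neg_mul, e2]
  have e3' : -(M:ℝ)*p3 = -((i:ℝ)+1) := by rw [neg_mul, e3]
  rw [e1, e2, e2', e3']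
  field_simp
  ring

lemma shiftSum (f g : ℕ → ℝ) (N : ℕ) (hf : f 0 = 0) (hg : g (N+1) = 0) :
    ∑ i ∈ Finset.range (N+1), f i * g (i+1) = ∑ i ∈ Finset.range (N+1), g i * f (i-1) := by
  rw [Finset.sum_range_succ, hg, Finset.sum_range_succ']
  simp [hf, mul_comm]

lemma fcoef_eq (M n : ℕ) (hM : 2 ≤ M) (hn : 1 ≤ n) (ξ : ℕ → ℝ) (hξ0 : ξ 0 = 0)
    (hξM : ∀ i, M ≤ i → ξ i = 0) :
    fcoef M ξ n = -(Real.sqrt 2/((n:ℝ)^2*Real.pi^2)) *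
      ((1/(M:ℝ)) * ∑ i ∈ Finset.Icc 1 (M-1),
        d2q M ξ i * Real.sin ((n:ℝ)*Real.pi*((i:ℝ)/M))) := by
  have hMpos : (0:ℝ) < M := by
    have : 0 < M := by omega
    exact_mod_cast this
  have hM0 : (M:ℝ) ≠ 0 := ne_of_gt hMpos
  have hπ := Real.pi_ne_zero
  have hn0 : ((n:ℝ)) ≠ 0 := by
    have : 0 < n := hn
    positivity
  set s : ℕ → ℝ := fun j => Real.sin ((n:ℝ)*Real.pi*((j:ℝ)/M)) with hs_def
  have hs0 : s 0 = 0 := by simp [hs_def]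
  have hsM : s M = 0 := by
    simp only [hs_def]
    rw [div_self hM0, mul_one, Real.sin_nat_mul_pi]
  have hξMM : ξ M = 0 := hξM M le_rfl
  -- Step 1: integral formula
  have step1 : fcoef M ξ n = ∑ i ∈ Finset.Icc 1 (M-1),
      (Real.sqrt 2 * (M:ℝ)/((n:ℝ)*Real.pi)^2) * (ξ i * (2*s i - s (i-1) - s (i+1))) := by
    unfold fcoef plf
    have hrw : ∀ x : ℝ, Real.sqrt 2 * Real.sin ((n:ℝ)*Real.pi*x) *
        (∑ i ∈ Finset.Icc 1 (M-1), ξ i * hatFn M i x)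
        = ∑ i ∈ Finset.Icc 1 (M-1),
            (Real.sqrt 2 * ξ i) * (Real.sin ((n:ℝ)*Real.pi*x) * hatFn M i x) := by
      intro x
      rw [Finset.mul_sum]
      exact Finset.sum_congr rfl fun i _ => by ring
    simp only [hrw]
    rw [intervalIntegral.integral_finset_sum]
    · refine Finset.sum_congr rfl fun i hi => ?_
      rw [Finset.mem_Icc] at hi
      have hi1 : 1 ≤ i := hi.1
      have hiM' : i + 1 ≤ M := by omega
      rw [intervalIntegral.integral_const_mul, hat_int M i n hi1 hiM' hn]
      simp only [hs_def]
      rw [Nat.cast_sub hi1]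
      push_cast
      ring
    · intro i _
      exact (continuous_const.mul ((Continuous.mul (by fun_prop) (hat_cont M i)))).intervalIntegrable 0 1
  obtain ⟨N, rfl⟩ : ∃ N, M = N + 1 := ⟨M-1, by omega⟩
  have hMN : N + 1 - 1 = N := by omega
  have hext : ∀ h : ℕ → ℝ, h 0 = 0 →
      ∑ i ∈ Finset.Icc 1 N, h i = ∑ i ∈ Finset.range (N+1), h i := by
    intro h h0
    have : Finset.range (N+1) = insert 0 (Finset.Icc 1 N) := by
      ext j
      simp only [Finset.mem_range, Finset.mem_insert, Finset.mem_Icc]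
      omega
    rw [this, Finset.sum_insert (by simp), h0, zero_add]
  rw [hMN] at step1 ⊢
  have T1 : ∑ i ∈ Finset.Icc 1 N, ξ i * s (i+1) = ∑ i ∈ Finset.Icc 1 N, s i * ξ (i-1) := by
    rw [hext (fun i => ξ i * s (i+1)) (by simp [hξ0]),
        hext (fun i => s i * ξ (i-1)) (by simp [hs0])]
    exact shiftSum ξ s N hξ0 hsM
  have T2 : ∑ i ∈ Finset.Icc 1 N, ξ i * s (i-1) = ∑ i ∈ Finset.Icc 1 N, s i * ξ (i+1) := by
    rw [hext (fun i => ξ i * s (i-1)) (by simp [hξ0]),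
        hext (fun i => s i * ξ (i+1)) (by simp [hs0])]
    exact (shiftSum s ξ N hs0 hξMM).symm
  have step2 : ∑ i ∈ Finset.Icc 1 N, ξ i * (2*s i - s (i-1) - s (i+1))
      = ∑ i ∈ Finset.Icc 1 N, s i * (2*ξ i - ξ (i-1) - ξ (i+1)) := by
    have e1 : ∀ i, ξ i * (2*s i - s (i-1) - s (i+1))
        = 2*(ξ i * s i) - ξ i * s (i-1) - ξ i * s (i+1) := fun i => by ring
    have e2 : ∀ i, s i * (2*ξ i - ξ (i-1) - ξ (i+1))
        = 2*(s i * ξ i) - s i * ξ (i-1) - s i * ξ (i+1) := fun i => by ring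
    simp only [e1, e2, Finset.sum_sub_distrib]
    rw [← Finset.mul_sum, ← Finset.mul_sum, T1, T2]
    simp only [mul_comm]
    ring
  have step3 : ∑ i ∈ Finset.Icc 1 N, s i * (2*ξ i - ξ (i-1) - ξ (i+1))
      = -(1/((N+1:ℕ):ℝ)^2) * ∑ i ∈ Finset.Icc 1 N,
          d2q (N+1) ξ i * s i := by
    rw [Finset.mul_sum]
    refine Finset.sum_congr rfl fun i _ => ?_
    unfold d2q
    field_simp
    ring
  rw [step1, ← Finset.mul_sum, step2, step3]
  have : ∑ i ∈ Finset.Icc 1 N, d2q (N+1) ξ i * Real.sin ((n:ℝ)*Real.pi*((i:ℝ)/((N+1:ℕ):ℝ)))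
      = ∑ i ∈ Finset.Icc 1 N, d2q (N+1) ξ i * s i := rfl
  rw [this]
  field_simp

lemma coef_bound (M n : ℕ) (hM : 2 ≤ M) (hn : 1 ≤ n) (ξ : ℕ → ℝ) (hξ0 : ξ 0 = 0)
    (hξM : ∀ i, M ≤ i → ξ i = 0) :
    |fcoef M ξ n| ≤ Real.sqrt 2 / ((n : ℝ) ^ 2 * Real.pi ^ 2) *
      Real.sqrt ((1 / (M : ℝ)) * ∑ i ∈ Finset.Icc 1 (M - 1), (d2q M ξ i) ^ 2) := by
  have hMpos : (0:ℝ) < M := by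
    have : 0 < M := by omega
    exact_mod_cast this
  have hπ := Real.pi_pos
  have hnpos : (0:ℝ) < n := by exact_mod_cast hn
  have hC : (0:ℝ) ≤ Real.sqrt 2 / ((n : ℝ) ^ 2 * Real.pi ^ 2) := by positivity
  rw [fcoef_eq M n hM hn ξ hξ0 hξM, abs_mul, abs_neg, abs_of_nonneg hC]
  refine mul_le_mul_of_nonneg_left ?_ hC
  set S := ∑ i ∈ Finset.Icc 1 (M-1), (d2q M ξ i)^2 with hS
  have hSnn : 0 ≤ S := Finset.sum_nonneg fun i _ => sq_nonneg _
  set X := ∑ i ∈ Finset.Icc 1 (M-1), d2q M ξ i * Real.sin ((n:ℝ)*Real.pi*((i:ℝ)/M)) with hX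
  have hX2 : X^2 ≤ S * M := by
    calc X^2 ≤ S * ∑ i ∈ Finset.Icc 1 (M-1), Real.sin ((n:ℝ)*Real.pi*((i:ℝ)/M))^2 :=
          Finset.sum_mul_sq_le_sq_mul_sq _ _ _
    _ ≤ S * M := by
        refine mul_le_mul_of_nonneg_left ?_ hSnn
        calc ∑ i ∈ Finset.Icc 1 (M-1), Real.sin ((n:ℝ)*Real.pi*((i:ℝ)/M))^2
            ≤ ∑ i ∈ Finset.Icc 1 (M-1), (1:ℝ) :=
              Finset.sum_le_sum fun i _ => Real.sin_sq_le_one _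
        _ ≤ M := by
            rw [Finset.sum_const, Nat.card_Icc, nsmul_eq_mul, mul_one]
            have : M - 1 + 1 - 1 ≤ M := by omega
            exact_mod_cast this
  have habs : |(1/(M:ℝ)) * X| = (1/(M:ℝ)) * |X| := by
    rw [abs_mul, abs_of_nonneg (by positivity)]
  rw [habs]
  have h1 : |X| ≤ Real.sqrt (S * M) := by
    rw [← Real.sqrt_sq_eq_abs]
    exact Real.sqrt_le_sqrt hX2
  have h2 : (1/(M:ℝ)) * Real.sqrt (S * M) = Real.sqrt ((1/(M:ℝ)) * S) := by
    rw [show (1/(M:ℝ)) * S = (1/(M:ℝ))^2 * (S * M) by field_simp,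
      Real.sqrt_mul (sq_nonneg _), Real.sqrt_sq (by positivity)]
  rw [← h2]
  exact mul_le_mul_of_nonneg_left h1 (by positivity)

/-- The finite element space `V` is contained in `D(A^γ)` for `γ < 3/4`:
for `φ₀ = Σ ξⁱvⁱ ∈ V` the Fourier coefficients satisfy
`|(ψₙ,φ₀)| ≤ (√2/(n²π²)) (Δx Σ (D²ξ)ᵢ²)^{1/2}` and
`‖A^γ φ₀‖ ≤ C_γ (Δx Σ (D²ξ)ᵢ²)^{1/2}`. -/
theorem stmt7 (δ : ℝ) (hδ : 0 < δ) (γ : ℝ) (hγ0 : 0 < γ) (hγ : γ < 3 / 4) :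
    ∃ C : ℝ, 0 < C ∧ ∀ M : ℕ, 2 ≤ M → ∀ ξ : ℕ → ℝ, ξ 0 = 0 → (∀ i, M ≤ i → ξ i = 0) →
      (∀ n : ℕ, 1 ≤ n →
        |fcoef M ξ n| ≤ Real.sqrt 2 / ((n : ℝ) ^ 2 * Real.pi ^ 2) *
          Real.sqrt ((1 / (M : ℝ)) * ∑ i ∈ Finset.Icc 1 (M - 1), (d2q M ξ i) ^ 2)) ∧
      Summable (fun n => (kEig δ n) ^ (2 * γ) * (fcoef M ξ (n + 1)) ^ 2) ∧
      Real.sqrt (∑' n, (kEig δ n) ^ (2 * γ) * (fcoef M ξ (n + 1)) ^ 2)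
        ≤ C * Real.sqrt ((1 / (M : ℝ)) * ∑ i ∈ Finset.Icc 1 (M - 1), (d2q M ξ i) ^ 2) := by
  have hπ := Real.pi_pos
  set K : ℝ := (δ * Real.pi^2)^(2*γ) * 2 / Real.pi^4 with hK_def
  have hKpos : 0 < K := by positivity
  have hp : (4*γ-4 : ℝ) < -1 := by linarith
  have hZsum : Summable (fun n : ℕ => ((n:ℝ)+1)^(4*γ-4)) := by
    have h1 : Summable (fun n : ℕ => (((n+1:ℕ)):ℝ)^(4*γ-4)) :=
      (summable_nat_add_iff 1).2 (Real.summable_nat_rpow.2 hp)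
    convert h1 using 2 with n
    push_cast
    ring_nf
  set Z : ℝ := ∑' n : ℕ, ((n:ℝ)+1)^(4*γ-4) with hZ_def
  have hZ1 : (1:ℝ) ≤ Z := by
    have h0 : ((0:ℕ):ℝ)+1 = 1 := by norm_num
    have := Summable.le_tsum hZsum 0 (fun i _ => Real.rpow_nonneg (by positivity) _)
    simpa [Real.one_rpow] using this
  have hZpos : 0 < Z := lt_of_lt_of_le one_pos hZ1
  refine ⟨Real.sqrt (K * Z), Real.sqrt_pos.2 (by positivity), ?_⟩
  intro M hM ξ hξ0 hξM
  set S : ℝ := (1 / (M : ℝ)) * ∑ i ∈ Finset.Icc 1 (M - 1), (d2q M ξ i) ^ 2 with hS_def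
  have hMpos : (0:ℝ) < M := by
    have : 0 < M := by omega
    exact_mod_cast this
  have hSnn : 0 ≤ S := by
    apply mul_nonneg (by positivity)
    exact Finset.sum_nonneg fun i _ => sq_nonneg _
  have part1 : ∀ n : ℕ, 1 ≤ n → |fcoef M ξ n| ≤
      Real.sqrt 2 / ((n : ℝ) ^ 2 * Real.pi ^ 2) * Real.sqrt S :=
    fun n hn => coef_bound M n hM hn ξ hξ0 hξM
  -- per-term bound
  have hterm : ∀ n : ℕ, (kEig δ n) ^ (2 * γ) * (fcoef M ξ (n + 1)) ^ 2
      ≤ K * ((n:ℝ)+1)^(4*γ-4) * S := by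
    intro n
    set x : ℝ := (n:ℝ)+1 with hx_def
    have hxpos : 0 < x := by positivity
    have hb := part1 (n+1) (by omega)
    have hcast : ((n+1:ℕ):ℝ) = x := by push_cast; ring
    rw [hcast] at hb
    have hfc2 : (fcoef M ξ (n+1))^2 ≤ 2 * S / (x^4 * Real.pi^4) := by
      have h1 : (fcoef M ξ (n+1))^2 ≤ (Real.sqrt 2 / (x^2 * Real.pi^2) * Real.sqrt S)^2 := by
        rw [← sq_abs]
        exact pow_le_pow_left₀ (abs_nonneg _) hb 2
      calc (fcoef M ξ (n+1))^2 ≤ _ := h1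
        _ = 2 * S / (x^4 * Real.pi^4) := by
            rw [mul_pow, div_pow, Real.sq_sqrt (by norm_num : (0:ℝ) ≤ 2), Real.sq_sqrt hSnn]
            ring
    have hkeig : (kEig δ n) ^ (2*γ) = (δ * Real.pi^2)^(2*γ) * x^(4*γ) := by
      unfold kEig
      rw [Real.mul_rpow (by positivity) (by positivity)]
      congr 1
      rw [← Real.rpow_natCast x 2, ← Real.rpow_mul hxpos.le]
      congr 1
      push_cast
      ring
    have hxx : x^((4:ℝ)) = x^(4:ℕ) := by
      rw [← Real.rpow_natCast x 4]
      norm_num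
    have hx4 : x^(4*γ-4) = x^(4*γ) / x^(4:ℕ) := by
      rw [Real.rpow_sub hxpos, hxx]
    rw [hkeig]
    calc (δ * Real.pi^2)^(2*γ) * x^(4*γ) * (fcoef M ξ (n+1))^2
        ≤ (δ * Real.pi^2)^(2*γ) * x^(4*γ) * (2 * S / (x^4 * Real.pi^4)) := by
          refine mul_le_mul_of_nonneg_left hfc2 ?_
          exact mul_nonneg (Real.rpow_nonneg (by positivity) _) (Real.rpow_nonneg hxpos.le _)
      _ = K * x^(4*γ-4) * S := by
          rw [hx4, hK_def]
          field_simp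
  have hsum2 : Summable (fun n : ℕ => K * ((n:ℝ)+1)^(4*γ-4) * S) := by
    have := (hZsum.mul_left K).mul_right S
    convert this using 2 with n
  have hnn : ∀ n : ℕ, 0 ≤ (kEig δ n) ^ (2 * γ) * (fcoef M ξ (n + 1)) ^ 2 := by
    intro n
    have : 0 ≤ kEig δ n := by unfold kEig; positivity
    exact mul_nonneg (Real.rpow_nonneg this _) (sq_nonneg _)
  have hsummable : Summable (fun n => (kEig δ n) ^ (2 * γ) * (fcoef M ξ (n + 1)) ^ 2) :=
    Summable.of_nonneg_of_le hnn hterm hsum2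
  refine ⟨part1, hsummable, ?_⟩
  have htsum : (∑' n, (kEig δ n) ^ (2 * γ) * (fcoef M ξ (n + 1)) ^ 2) ≤ (K * Z) * S := by
    calc (∑' n, (kEig δ n) ^ (2 * γ) * (fcoef M ξ (n + 1)) ^ 2)
        ≤ ∑' n : ℕ, K * ((n:ℝ)+1)^(4*γ-4) * S := Summable.tsum_le_tsum hterm hsummable hsum2
      _ = (K * Z) * S := by
          have : (fun n : ℕ => K * ((n:ℝ)+1)^(4*γ-4) * S) =
              fun n : ℕ => (K * S) * ((n:ℝ)+1)^(4*γ-4) := by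
            funext n; ring
          rw [this, tsum_mul_left, hZ_def]
          ring
  calc Real.sqrt (∑' n, (kEig δ n) ^ (2 * γ) * (fcoef M ξ (n + 1)) ^ 2)
      ≤ Real.sqrt ((K * Z) * S) := Real.sqrt_le_sqrt htsum
    _ = Real.sqrt (K * Z) * Real.sqrt S := Real.sqrt_mul (by positivity) S
end
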